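/- arXiv:1502.03924 — 2 statements merged into one kernel-verified Lean document; each statement's English description precedes it below -/
import Mathlib

section
/- Let ℂ : Sym₃ → Sym₃ be an elasticity tensor that is coercive with constant c > 0, and let Ā ∈ Sym₂. Define b^min ∈ ℝ³ by b^min_j := −(𝕔⁻¹)_{ji}(ℂĀ)_{i3}. Then the minimum of b ↦ ℂ(Ā + b⊙e₃)·(Ā + b⊙e₃) over ℝ³ is attained at b = b^min, and the minimizing stress is planar: (ℂ(Ā + b^min⊙e₃))_{i3} = 0 for i = 1, 2, 3. -/
open Matrix
open scoped BigOperators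

noncomputable section

/-- The space of real 3×3 matrices; symmetric ones form `Sym₃`. -/
abbrev M3 : Type := Matrix (Fin 3) (Fin 3) ℝ

/-- The Frobenius pairing `A·B := tr (A*B)`. -/
def dot3 (A B : M3) : ℝ := (A * B).trace

/-- The standard basis vector `e i` of `ℝ³`. -/
def bv (i : Fin 3) : Fin 3 → ℝ := Pi.single i 1

/-- The symmetrized tensor product `a ⊙ b := (1/2)(a⊗b + b⊗a)`. -/
def symOd (a b : Fin 3 → ℝ) : M3 := Matrix.of fun i j => (a i * b j + b i * a j) / 2

/-- `b ⊙ e₃`. -/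
def od3 (b : Fin 3 → ℝ) : M3 := symOd b (bv 2)

/-- Components `ℂ_{ijkl} := ℂ(e_k⊙e_l)·(e_i⊙e_j)` of the elasticity tensor. -/
def Ccomp (C : M3 →ₗ[ℝ] M3) (i j k l : Fin 3) : ℝ :=
  dot3 (C (symOd (bv k) (bv l))) (symOd (bv i) (bv j))

/-- The matrix `𝕔` with `𝕔_{ij} := ℂ_{i3j3}`. -/
def cmat (C : M3 →ₗ[ℝ] M3) : M3 := Matrix.of fun i j => Ccomp C i 2 j 2

/-- `A` has vanishing third row and column (identification of `Sym₂` inside `Sym₃`). -/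
def planar (A : M3) : Prop := ∀ i : Fin 3, A i 2 = 0 ∧ A 2 i = 0

/-- The minimizer `b^min_j := −(𝕔⁻¹)_{ji}(ℂĀ)_{i3}`. -/
def bmin (C : M3 →ₗ[ℝ] M3) (A : M3) : Fin 3 → ℝ :=
  fun j => -∑ i : Fin 3, (cmat C)⁻¹ j i * (C A) i 2

lemma dot3_expand (A B : M3) : dot3 A B = ∑ i, ∑ j, A i j * B j i := by
  simp [dot3, Matrix.trace, Matrix.mul_apply, Matrix.diag]

lemma dot3_comm (A B : M3) : dot3 A B = dot3 B A := Matrix.trace_mul_comm A B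

lemma dot3_add_left (A B D : M3) : dot3 (A + B) D = dot3 A D + dot3 B D := by
  simp [dot3, Matrix.add_mul]

lemma dot3_add_right (A B D : M3) : dot3 D (A + B) = dot3 D A + dot3 D B := by
  simp [dot3, Matrix.mul_add]

lemma od3_isSymm (b : Fin 3 → ℝ) : (od3 b).IsSymm := by
  unfold Matrix.IsSymm
  ext i j
  simp [od3, symOd]
  ring

lemma od3_add (x y : Fin 3 → ℝ) : od3 (x + y) = od3 x + od3 y := by
  ext i j
  simp [od3, symOd]
  ring

lemma od3_eq_sum (b : Fin 3 → ℝ) : od3 b = ∑ j : Fin 3, b j • symOd (bv j) (bv 2) := by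
  ext i k
  fin_cases i <;> fin_cases k <;>
    simp [od3, symOd, bv, Fin.sum_univ_three, Pi.single_apply, Matrix.sum_apply] <;> ring

lemma dot3_od3 (M : M3) (hM : M.IsSymm) (b : Fin 3 → ℝ) :
    dot3 M (od3 b) = ∑ i, b i * M i 2 := by
  rw [dot3_expand]
  rw [Fin.sum_univ_three]
  simp only [Fin.sum_univ_three, od3, symOd, bv, Matrix.of_apply, Pi.single_apply]
  rw [hM.apply 0 2, hM.apply 1 2]
  norm_num [show ((0:Fin 3) = 2) ↔ False by decide, show ((1:Fin 3) = 2) ↔ False by decide]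
  ring

lemma dot3_od3_self (x : Fin 3 → ℝ) :
    dot3 (od3 x) (od3 x) = x 0 ^ 2 / 2 + x 1 ^ 2 / 2 + x 2 ^ 2 := by
  rw [dot3_expand]
  simp [Fin.sum_univ_three, od3, symOd, bv, Pi.single_apply]
  ring

lemma cmat_apply (C : M3 →ₗ[ℝ] M3) (hCsymm : ∀ A : M3, A.IsSymm → (C A).IsSymm)
    (i j : Fin 3) : cmat C i j = (C (symOd (bv j) (bv 2))) i 2 := by
  have h : (C (symOd (bv j) (bv 2))).IsSymm := hCsymm _ (od3_isSymm (bv j))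
  have : cmat C i j = dot3 (C (symOd (bv j) (bv 2))) (od3 (bv i)) := rfl
  rw [this, dot3_od3 _ h]
  fin_cases i <;> simp [bv, Fin.sum_univ_three, Pi.single_apply]

lemma C_od3_entry (C : M3 →ₗ[ℝ] M3) (hCsymm : ∀ A : M3, A.IsSymm → (C A).IsSymm)
    (b : Fin 3 → ℝ) (i : Fin 3) :
    (C (od3 b)) i 2 = ∑ j, cmat C i j * b j := by
  rw [od3_eq_sum, map_sum]
  simp only [LinearMap.map_smul, Matrix.sum_apply, Matrix.smul_apply, smul_eq_mul]
  refine Finset.sum_congr rfl fun j _ => ?_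
  rw [cmat_apply C hCsymm i j]
  ring

lemma cmat_symm (C : M3 →ₗ[ℝ] M3)
    (hCsa : ∀ A B : M3, A.IsSymm → B.IsSymm → dot3 (C A) B = dot3 A (C B)) :
    (cmat C).IsSymm := by
  unfold Matrix.IsSymm
  ext i j
  show cmat C j i = cmat C i j
  have h1 : cmat C j i = dot3 (C (od3 (bv i))) (od3 (bv j)) := rfl
  have h2 : cmat C i j = dot3 (C (od3 (bv j))) (od3 (bv i)) := rfl
  rw [h1, h2, hCsa _ _ (od3_isSymm (bv i)) (od3_isSymm (bv j)), dot3_comm]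

lemma cmat_quadform (C : M3 →ₗ[ℝ] M3) (hCsymm : ∀ A : M3, A.IsSymm → (C A).IsSymm)
    (x : Fin 3 → ℝ) :
    x ⬝ᵥ (cmat C).mulVec x = dot3 (C (od3 x)) (od3 x) := by
  rw [dot3_od3 _ (hCsymm _ (od3_isSymm x)) x]
  simp only [dotProduct, Matrix.mulVec, dotProduct]
  refine Finset.sum_congr rfl fun i _ => ?_
  rw [C_od3_entry C hCsymm x i]

lemma cmat_posdef (C : M3 →ₗ[ℝ] M3) (c : ℝ) (hc : 0 < c)
    (hCsymm : ∀ A : M3, A.IsSymm → (C A).IsSymm)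
    (hCsa : ∀ A B : M3, A.IsSymm → B.IsSymm → dot3 (C A) B = dot3 A (C B))
    (hCcoer : ∀ A : M3, A.IsSymm → c * dot3 A A ≤ dot3 (C A) A) :
    (cmat C).PosDef := by
  rw [Matrix.posDef_iff_dotProduct_mulVec]
  constructor
  · have h := cmat_symm C hCsa
    unfold Matrix.IsSymm at h
    unfold Matrix.IsHermitian
    ext i j
    simp [Matrix.conjTranspose_apply]
    exact congrFun (congrFun h i) j
  · intro x hx
    simp only [star_trivial, RCLike.re_to_real]
    rw [cmat_quadform C hCsymm x]
    have h1 := hCcoer (od3 x) (od3_isSymm x)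
    have h2 : 0 < dot3 (od3 x) (od3 x) := by
      rw [dot3_od3_self]
      obtain ⟨i, hi⟩ := Function.ne_iff.mp hx
      fin_cases i <;> simp at hi <;> positivity
    calc (0:ℝ) < c * dot3 (od3 x) (od3 x) := by positivity
      _ ≤ dot3 (C (od3 x)) (od3 x) := h1

lemma dot3_od3_nonneg (x : Fin 3 → ℝ) : 0 ≤ dot3 (od3 x) (od3 x) := by
  rw [dot3_od3_self]; positivity

lemma dot3_quad (C : M3 →ₗ[ℝ] M3) (X H : M3) :
    dot3 (C (X + H)) (X + H)
      = dot3 (C X) X + dot3 (C X) H + dot3 (C H) X + dot3 (C H) H := by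
  rw [map_add, dot3_add_left, dot3_add_right, dot3_add_right]
  ring

/-- Let `ℂ` be an elasticity tensor, coercive with constant `c > 0`, and
`Ā ∈ Sym₂`.  Then the minimum of `b ↦ ℂ(Ā + b⊙e₃)·(Ā + b⊙e₃)` over `ℝ³` is attained at
`b = b^min` with `b^min_j := −(𝕔⁻¹)_{ji}(ℂĀ)_{i3}`, and the minimizing stress is planar:
`(ℂ(Ā + b^min⊙e₃))_{i3} = 0` for `i = 1,2,3`. -/
theorem bmin_isMinimizer_and_planar_stress
    (C : M3 →ₗ[ℝ] M3) (c : ℝ) (hc : 0 < c)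
    (hCsymm : ∀ A : M3, A.IsSymm → (C A).IsSymm)
    (hCsa : ∀ A B : M3, A.IsSymm → B.IsSymm → dot3 (C A) B = dot3 A (C B))
    (hCcoer : ∀ A : M3, A.IsSymm → c * dot3 A A ≤ dot3 (C A) A)
    (Ab : M3) (hAs : Ab.IsSymm) (hAp : planar Ab) :
    (∀ b : Fin 3 → ℝ,
        dot3 (C (Ab + od3 (bmin C Ab))) (Ab + od3 (bmin C Ab))
          ≤ dot3 (C (Ab + od3 b)) (Ab + od3 b))
    ∧ (∀ i : Fin 3, (C (Ab + od3 (bmin C Ab))) i 2 = 0) := by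
  have hdet : IsUnit (cmat C).det :=
    isUnit_iff_ne_zero.mpr (cmat_posdef C c hc hCsymm hCsa hCcoer).det_pos.ne'
  have hP : ∀ i : Fin 3, (C (Ab + od3 (bmin C Ab))) i 2 = 0 := by
    intro i
    rw [map_add, Matrix.add_apply, C_od3_entry C hCsymm]
    have h1 : ∑ j, cmat C i j * bmin C Ab j = (cmat C *ᵥ (bmin C Ab)) i := by
      simp [Matrix.mulVec, dotProduct]
    have h2 : bmin C Ab = -((cmat C)⁻¹ *ᵥ (fun k => (C Ab) k 2)) := by
      funext j
      simp [bmin, Matrix.mulVec, dotProduct]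
    rw [h1, h2, Matrix.mulVec_neg, Matrix.mulVec_mulVec,
      Matrix.mul_nonsing_inv _ hdet, Matrix.one_mulVec]
    simp
  refine ⟨?_, hP⟩
  intro b
  set A' := Ab + od3 (bmin C Ab) with hA'
  have hA's : A'.IsSymm := hAs.add (od3_isSymm _)
  have hHs : (od3 (b - bmin C Ab)).IsSymm := od3_isSymm _
  have hsplit : Ab + od3 b = A' + od3 (b - bmin C Ab) := by
    have hb : b = bmin C Ab + (b - bmin C Ab) := by abel
    rw [hA', add_assoc, ← od3_add]
    rw [← hb]
  have key := dot3_quad C A' (od3 (b - bmin C Ab))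
  rw [← hsplit] at key
  have hcross : dot3 (C A') (od3 (b - bmin C Ab)) = 0 := by
    rw [dot3_od3 _ (hCsymm _ hA's)]
    simp [hP]
  have hcross2 : dot3 (C (od3 (b - bmin C Ab))) A' = 0 := by
    rw [hCsa _ _ hHs hA's, dot3_comm, hcross]
  have hq : 0 ≤ dot3 (C (od3 (b - bmin C Ab))) (od3 (b - bmin C Ab)) := by
    have h1 := hCcoer _ hHs
    have h2 := dot3_od3_nonneg (b - bmin C Ab)
    nlinarith
  linarith
end
end

section
/- Let ℂ : Sym₃ → Sym₃ be an elasticity tensor that is coercive with constant c > 0, let Z̄ ∈ Sym₂, let G ∈ ℝ³, and let z ∈ ℝ³ be defined by z_j = (𝕔⁻¹)_{ji}( G_i − (ℂZ̄)_{i3} ). Then, with Z := Z̄ + z⊙e₃ and 𝖿 := 𝕔⁻¹G, one has the energy splitting ℂZ·Z = C̄Z̄·Z̄ + 𝕔𝖿·𝖿. -/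
open Matrix
open scoped BigOperators

noncomputable section

/-- Components `C̄_{αβγδ} := ℂ_{αβγδ} − ℂ_{αβj3}(𝕔⁻¹)_{ji}ℂ_{i3γδ}` of the reduced tensor. -/
def cbar (C : M3 →ₗ[ℝ] M3) (α β γ δ : Fin 3) : ℝ :=
  Ccomp C α β γ δ
    - ∑ j : Fin 3, ∑ i : Fin 3, Ccomp C α β j 2 * (cmat C)⁻¹ j i * Ccomp C i 2 γ δ

/-- The quadratic form `C̄Ā·Ā`. -/
def qbar (C : M3 →ₗ[ℝ] M3) (A : M3) : ℝ :=
  ∑ α : Fin 3, ∑ β : Fin 3, ∑ γ : Fin 3, ∑ δ : Fin 3, cbar C α β γ δ * A γ δ * A α β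

/-- `z_j := (𝕔⁻¹)_{ji}( G_i − (ℂZ̄)_{i3} )`. -/
def zf (C : M3 →ₗ[ℝ] M3) (Z : M3) (G : Fin 3 → ℝ) : Fin 3 → ℝ :=
  fun j => ∑ i : Fin 3, (cmat C)⁻¹ j i * (G i - (C Z) i 2)

lemma dot3_sum_left {ι : Type*} (s : Finset ι) (f : ι → M3) (B : M3) :
    dot3 (∑ i ∈ s, f i) B = ∑ i ∈ s, dot3 (f i) B := by
  simp [dot3, Finset.sum_mul]

lemma dot3_sum_right {ι : Type*} (s : Finset ι) (f : ι → M3) (B : M3) :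
    dot3 B (∑ i ∈ s, f i) = ∑ i ∈ s, dot3 B (f i) := by
  simp [dot3, Finset.mul_sum]

lemma dot3_smul_left (r : ℝ) (A B : M3) : dot3 (r • A) B = r * dot3 A B := by
  simp [dot3, smul_mul_assoc]

lemma dot3_smul_right (r : ℝ) (A B : M3) : dot3 B (r • A) = r * dot3 B A := by
  simp [dot3, mul_smul_comm]

lemma symOd_isSymm (a b : Fin 3 → ℝ) : (symOd a b).IsSymm := by
  apply Matrix.IsSymm.ext; intro i j; simp [symOd]; ring

lemma dot3_symOd (B : M3) (i j : Fin 3) :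
    dot3 B (symOd (bv i) (bv j)) = (B i j + B j i) / 2 := by
  simp only [dot3, Matrix.trace, Matrix.diag, Matrix.mul_apply, symOd, bv, Matrix.of_apply]
  rw [Fin.sum_univ_three]
  simp only [Fin.sum_univ_three]
  fin_cases i <;> fin_cases j <;> simp [Pi.single_apply] <;> ring

lemma sym_decomp (A : M3) (hA : A.IsSymm) :
    A = ∑ i : Fin 3, ∑ j : Fin 3, A i j • symOd (bv i) (bv j) := by
  ext k l
  simp only [Matrix.sum_apply, Matrix.smul_apply, symOd, bv, Matrix.of_apply, smul_eq_mul]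
  rw [Fin.sum_univ_three]
  simp only [Fin.sum_univ_three]
  fin_cases k <;> fin_cases l <;> simp [Pi.single_apply] <;>
    linarith [hA.apply 0 1, hA.apply 0 2, hA.apply 1 2]

lemma od3_decomp (a : Fin 3 → ℝ) :
    od3 a = ∑ j : Fin 3, a j • symOd (bv j) (bv 2) := by
  ext k l
  simp only [od3, Matrix.sum_apply, Matrix.smul_apply, symOd, bv, Matrix.of_apply, smul_eq_mul]
  rw [Fin.sum_univ_three]
  fin_cases k <;> fin_cases l <;> simp [Pi.single_apply] <;> ring

lemma od3_dot (x : Fin 3 → ℝ) : dot3 (od3 x) (od3 x) = (x 0^2 + x 1^2)/2 + x 2^2 := by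
  simp [dot3, Matrix.trace, Matrix.diag, Matrix.mul_apply, od3, symOd, bv,
    Fin.sum_univ_three, Pi.single_apply]
  ring

lemma dot3_C_od3 (C : M3 →ₗ[ℝ] M3) (x y : Fin 3 → ℝ) :
    dot3 (C (od3 x)) (od3 y) = y ⬝ᵥ (cmat C *ᵥ x) := by
  rw [od3_decomp x, od3_decomp y]
  simp only [map_sum, _root_.map_smul, dot3_sum_left, dot3_sum_right, dot3_smul_left, dot3_smul_right]
  simp only [dotProduct, Matrix.mulVec, cmat, Ccomp, Matrix.of_apply]
  simp only [dotProduct, Fin.sum_univ_three]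
  ring

set_option maxHeartbeats 1000000 in
lemma dot3_C_self (C : M3 →ₗ[ℝ] M3) (A : M3) (hA : A.IsSymm) :
    dot3 (C A) A
      = ∑ α : Fin 3, ∑ β : Fin 3, ∑ γ : Fin 3, ∑ δ : Fin 3,
          Ccomp C α β γ δ * A γ δ * A α β := by
  conv_lhs => rw [sym_decomp A hA]
  simp only [map_sum, _root_.map_smul, dot3_sum_left, dot3_sum_right, dot3_smul_left, dot3_smul_right]
  simp only [Ccomp, Fin.sum_univ_three]
  ring

set_option maxHeartbeats 1000000 in
/-- Let `ℂ` be an elasticity tensor, coercive with constant `c > 0`, let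
`Z̄ ∈ Sym₂`, `G ∈ ℝ³`, and let `z` be given by `z_j = (𝕔⁻¹)_{ji}(G_i − (ℂZ̄)_{i3})`.  Then,
with `Z := Z̄ + z⊙e₃` and `𝖿 := 𝕔⁻¹G`, one has the energy splitting
`ℂZ·Z = C̄Z̄·Z̄ + 𝕔𝖿·𝖿`. -/
theorem energy_splitting
    (C : M3 →ₗ[ℝ] M3) (c : ℝ) (hc : 0 < c)
    (hCsymm : ∀ A : M3, A.IsSymm → (C A).IsSymm)
    (hCsa : ∀ A B : M3, A.IsSymm → B.IsSymm → dot3 (C A) B = dot3 A (C B))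
    (hCcoer : ∀ A : M3, A.IsSymm → c * dot3 A A ≤ dot3 (C A) A)
    (Zb : M3) (hZs : Zb.IsSymm) (hZp : planar Zb) (G : Fin 3 → ℝ) :
    dot3 (C (Zb + od3 (zf C Zb G))) (Zb + od3 (zf C Zb G))
      = qbar C Zb + ((cmat C) *ᵥ ((cmat C)⁻¹ *ᵥ G)) ⬝ᵥ ((cmat C)⁻¹ *ᵥ G) := by
  have hCZs : (C Zb).IsSymm := hCsymm Zb hZs
  -- symmetry of cmat
  have hcsym : (cmat C).IsSymm := by
    apply Matrix.IsSymm.ext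
    intro i j
    show cmat C j i = cmat C i j
    simp only [cmat, Matrix.of_apply, Ccomp]
    rw [hCsa _ _ (symOd_isSymm _ _) (symOd_isSymm _ _), dot3_comm]
  -- positive definiteness and invertibility of cmat
  have hpd : (cmat C).PosDef := by
    refine Matrix.PosDef.of_dotProduct_mulVec_pos hcsym fun x hx => ?_
    have h1 := hCcoer (od3 x) (symOd_isSymm _ _)
    have h2 : 0 < dot3 (od3 x) (od3 x) := by
      rw [od3_dot]
      have hx' : x 0 ≠ 0 ∨ x 1 ≠ 0 ∨ x 2 ≠ 0 := by
        by_contra h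
        push_neg at h
        apply hx
        funext i
        fin_cases i <;> simp_all
      rcases hx' with h | h | h <;>
        nlinarith [mul_self_pos.mpr h, sq_nonneg (x 0), sq_nonneg (x 1), sq_nonneg (x 2)]
    have h3 := dot3_C_od3 C x x
    show (0 : ℝ) < star x ⬝ᵥ (cmat C *ᵥ x)
    rw [show star x = x from rfl, ← h3]
    nlinarith
  have hdet : IsUnit (cmat C).det := isUnit_iff_ne_zero.mpr hpd.det_pos.ne'
  have hinv : cmat C * (cmat C)⁻¹ = 1 := Matrix.mul_nonsing_inv _ hdet
  have hm_sym : ∀ i j : Fin 3, (cmat C)⁻¹ i j = (cmat C)⁻¹ j i := by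
    have ht : ((cmat C)⁻¹)ᵀ = (cmat C)⁻¹ := by
      rw [Matrix.transpose_nonsing_inv, hcsym.eq]
    intro i j
    conv_lhs => rw [← ht]
    rw [Matrix.transpose_apply]
  -- the two contraction identities
  have hZd := sym_decomp Zb hZs
  have hB : ∀ i : Fin 3, (∑ γ : Fin 3, ∑ δ : Fin 3, Ccomp C i 2 γ δ * Zb γ δ) = (C Zb) i 2 := by
    intro i
    have h1 : dot3 (C Zb) (symOd (bv i) (bv 2)) = (C Zb) i 2 := by
      rw [dot3_symOd, hCZs.apply i 2]; ring
    rw [← h1]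
    conv_rhs => rw [hZd]
    simp only [map_sum, _root_.map_smul, dot3_sum_left, dot3_smul_left]
    simp only [Ccomp, Fin.sum_univ_three]
    ring
  have hA : ∀ j : Fin 3, (∑ α : Fin 3, ∑ β : Fin 3, Ccomp C α β j 2 * Zb α β) = (C Zb) j 2 := by
    intro j
    have h1 : dot3 (C (symOd (bv j) (bv 2))) Zb = (C Zb) j 2 := by
      rw [hCsa _ _ (symOd_isSymm _ _) hZs, dot3_comm, dot3_symOd, hCZs.apply j 2]; ring
    rw [← h1]
    conv_rhs => rw [hZd]
    simp only [dot3_sum_right, dot3_smul_right]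
    simp only [Ccomp, Fin.sum_univ_three]
    ring
  -- the qbar splitting
  have hF2 : qbar C Zb = dot3 (C Zb) Zb
      - ∑ j : Fin 3, ∑ i : Fin 3, (C Zb) j 2 * (cmat C)⁻¹ j i * (C Zb) i 2 := by
    have e1 : qbar C Zb
        = (∑ α : Fin 3, ∑ β : Fin 3, ∑ γ : Fin 3, ∑ δ : Fin 3,
            Ccomp C α β γ δ * Zb γ δ * Zb α β)
          - ∑ j : Fin 3, ∑ i : Fin 3,
              (∑ α : Fin 3, ∑ β : Fin 3, Ccomp C α β j 2 * Zb α β) * (cmat C)⁻¹ j i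
                * (∑ γ : Fin 3, ∑ δ : Fin 3, Ccomp C i 2 γ δ * Zb γ δ) := by
      simp only [qbar, cbar, Fin.sum_univ_three]
      ring
    rw [e1, dot3_C_self C Zb hZs]
    simp only [hA, hB]
  -- decompose the left-hand side
  set z := zf C Zb G with hzdef
  have hodz : (od3 z).IsSymm := symOd_isSymm _ _
  have hadd : dot3 (C (Zb + od3 z)) (Zb + od3 z)
      = dot3 (C Zb) Zb + dot3 (C Zb) (od3 z) + dot3 (C (od3 z)) Zb
        + dot3 (C (od3 z)) (od3 z) := by
    simp only [map_add, dot3, add_mul, mul_add, Matrix.trace_add]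
    ring
  have hcross : dot3 (C Zb) (od3 z) = ∑ j : Fin 3, z j * (C Zb) j 2 := by
    rw [od3_decomp]
    simp only [dot3_sum_right, dot3_smul_right, dot3_symOd]
    refine Finset.sum_congr rfl fun j _ => ?_
    rw [hCZs.apply j 2]
    ring
  have hcross2 : dot3 (C (od3 z)) Zb = dot3 (C Zb) (od3 z) := by
    rw [hCsa _ _ hodz hZs]
    exact dot3_comm _ _
  have hmvz : cmat C *ᵥ z = fun i => G i - (C Zb) i 2 := by
    have hz : z = (cmat C)⁻¹ *ᵥ (fun i => G i - (C Zb) i 2) := by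
      funext j
      simp [hzdef, zf, Matrix.mulVec, dotProduct]
    rw [hz, Matrix.mulVec_mulVec, hinv, Matrix.one_mulVec]
  have hquad : dot3 (C (od3 z)) (od3 z) = z ⬝ᵥ (fun i => G i - (C Zb) i 2) := by
    rw [dot3_C_od3, hmvz]
  have hfG : cmat C *ᵥ ((cmat C)⁻¹ *ᵥ G) = G := by
    rw [Matrix.mulVec_mulVec, hinv, Matrix.one_mulVec]
  rw [hadd, hcross2, hcross, hquad, hF2, hfG]
  simp only [hzdef, zf, dotProduct, Matrix.mulVec, dotProduct, Fin.sum_univ_three]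
  linear_combination
    (((C Zb) 0 2) * G 1 - G 0 * ((C Zb) 1 2)) * hm_sym 0 1
    + (((C Zb) 0 2) * G 2 - G 0 * ((C Zb) 2 2)) * hm_sym 0 2
    + (((C Zb) 1 2) * G 2 - G 1 * ((C Zb) 2 2)) * hm_sym 1 2
end
end
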